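/- arXiv:2303.11365 — 3 statements merged into one kernel-verified Lean document; each statement's English description precedes it below -/
import Mathlib

section
/- (Eigenvalue computation at the bubbly steady state.) Suppose G > 1 and 0 < w < w_b^*, where w_b^* > 0 is the unique solution of c_y(1,G·w_b^*)/c_z(1,G·w_b^*) = G. Let s := (w_b^* − w)/(w_b^* + 1) ∈ (0,1), (y,z) := (1−s, G·(w+s)), x := y/z, g(u) := c(u,1), and ε := c_y·c_z/(c·c_yz) evaluated at (y,z). Define n := g'(x) − (s·(1+w)/(G·(w+s)²))·g''(x) and d := g'(x) + (s·(1−s)·(1+w)/(G·(w+s)³))·g''(x). Then: (a) n = (1 + (1/ε)·s/(1−s))·g'(x) and d = (1 − (1/ε)·s/(w+s))·g'(x); (b) n > d; (c) d = 0 if and only if ε = (1−w/w_b^*)/(1+w); and (d) if ((1−w_b^*)/2)·(1−w/w_b^*)/(1+w) < ε and ε ≠ (1−w/w_b^*)/(1+w), then d ≠ 0 and |n/d| > 1. -/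
open Real Filter Set Topology

/-- Assumption C: `c` is a positive, homogeneous of degree 1, twice continuously
differentiable function on `(0,∞)²` with partial derivatives `cy, cz > 0`, second partial
derivatives `cyy, czz < 0`, and Inada conditions. -/
structure AssumptionC (c cy cz cyy cyz czz : ℝ → ℝ → ℝ) : Prop where
  c_pos : ∀ ⦃y z : ℝ⦄, 0 < y → 0 < z → 0 < c y z
  homog : ∀ ⦃l y z : ℝ⦄, 0 < l → 0 < y → 0 < z → c (l * y) (l * z) = l * c y z
  hderiv_y : ∀ ⦃y z : ℝ⦄, 0 < y → 0 < z → HasDerivAt (fun u => c u z) (cy y z) y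
  hderiv_z : ∀ ⦃y z : ℝ⦄, 0 < y → 0 < z → HasDerivAt (fun v => c y v) (cz y z) z
  hderiv_yy : ∀ ⦃y z : ℝ⦄, 0 < y → 0 < z → HasDerivAt (fun u => cy u z) (cyy y z) y
  hderiv_yz : ∀ ⦃y z : ℝ⦄, 0 < y → 0 < z → HasDerivAt (fun v => cy y v) (cyz y z) z
  hderiv_zy : ∀ ⦃y z : ℝ⦄, 0 < y → 0 < z → HasDerivAt (fun u => cz u z) (cyz y z) y
  hderiv_zz : ∀ ⦃y z : ℝ⦄, 0 < y → 0 < z → HasDerivAt (fun v => cz y v) (czz y z) z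
  cy_pos : ∀ ⦃y z : ℝ⦄, 0 < y → 0 < z → 0 < cy y z
  cz_pos : ∀ ⦃y z : ℝ⦄, 0 < y → 0 < z → 0 < cz y z
  cyy_neg : ∀ ⦃y z : ℝ⦄, 0 < y → 0 < z → cyy y z < 0
  czz_neg : ∀ ⦃y z : ℝ⦄, 0 < y → 0 < z → czz y z < 0
  cont2 : ContinuousOn (fun p : ℝ × ℝ => (cyy p.1 p.2, cyz p.1 p.2, czz p.1 p.2))
    {p : ℝ × ℝ | 0 < p.1 ∧ 0 < p.2}
  inada_y : ∀ ⦃z : ℝ⦄, 0 < z → Tendsto (fun y => cy y z) (𝓝[>] (0:ℝ)) atTop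
  inada_z : ∀ ⦃y : ℝ⦄, 0 < y → Tendsto (fun z => cz y z) (𝓝[>] (0:ℝ)) atTop

lemma cy_homog0 {c cy cz cyy cyz czz : ℝ → ℝ → ℝ} (hC : AssumptionC c cy cz cyy cyz czz)
    {l y z : ℝ} (hl : 0 < l) (hy : 0 < y) (hz : 0 < z) :
    cy (l * y) (l * z) = cy y z := by
  have h1 : HasDerivAt (fun u => c (l * u) (l * z)) (cy (l * y) (l * z) * l) y := by
    have := (hC.hderiv_y (mul_pos hl hy) (mul_pos hl hz)).comp y
      ((hasDerivAt_id y).const_mul l)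
    simpa [Function.comp_def] using this
  have h2 : HasDerivAt (fun u => l * c u z) (l * cy y z) y :=
    (hC.hderiv_y hy hz).const_mul l
  have heq : (fun u => l * c u z) =ᶠ[𝓝 y] fun u => c (l * u) (l * z) := by
    filter_upwards [eventually_gt_nhds hy] with u hu
    exact (hC.homog hl hu hz).symm
  have h3 := (h2.congr_of_eventuallyEq heq.symm).unique h1
  have hl' : l ≠ 0 := ne_of_gt hl
  rw [mul_comm _ l] at h3
  exact (mul_left_cancel₀ hl' h3).symm

lemma cz_homog0 {c cy cz cyy cyz czz : ℝ → ℝ → ℝ} (hC : AssumptionC c cy cz cyy cyz czz)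
    {l y z : ℝ} (hl : 0 < l) (hy : 0 < y) (hz : 0 < z) :
    cz (l * y) (l * z) = cz y z := by
  have h1 : HasDerivAt (fun v => c (l * y) (l * v)) (cz (l * y) (l * z) * l) z := by
    have := (hC.hderiv_z (mul_pos hl hy) (mul_pos hl hz)).comp z
      ((hasDerivAt_id z).const_mul l)
    simpa [Function.comp_def] using this
  have h2 : HasDerivAt (fun v => l * c y v) (l * cz y z) z :=
    (hC.hderiv_z hy hz).const_mul l
  have heq : (fun v => l * c y v) =ᶠ[𝓝 z] fun v => c (l * y) (l * v) := by
    filter_upwards [eventually_gt_nhds hz] with v hv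
    exact (hC.homog hl hy hv).symm
  have h3 := (h2.congr_of_eventuallyEq heq.symm).unique h1
  have hl' : l ≠ 0 := ne_of_gt hl
  rw [mul_comm _ l] at h3
  exact (mul_left_cancel₀ hl' h3).symm

lemma cz_euler {c cy cz cyy cyz czz : ℝ → ℝ → ℝ} (hC : AssumptionC c cy cz cyy cyz czz)
    {y z : ℝ} (hy : 0 < y) (hz : 0 < z) :
    cz y z = c (y / z) 1 - (y / z) * cy (y / z) 1 := by
  have hx : 0 < y / z := div_pos hy hz
  -- derivative of v ↦ v * c (y/v) 1 at z
  have hinner : HasDerivAt (fun v : ℝ => c (y / v) 1) (cy (y / z) 1 * (-(y / z ^ 2))) z := by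
    have hdiv : HasDerivAt (fun v : ℝ => y / v) (-(y / z ^ 2)) z := by
      have := (hasDerivAt_inv (ne_of_gt hz)).const_mul y
      simpa [div_eq_mul_inv, mul_comm, mul_div_assoc] using this
    exact (hC.hderiv_y hx one_pos).comp z hdiv
  have h1 : HasDerivAt (fun v : ℝ => v * c (y / v) 1)
      (1 * c (y / z) 1 + z * (cy (y / z) 1 * (-(y / z ^ 2)))) z :=
    (hasDerivAt_id z).mul hinner
  have heq : (fun v : ℝ => c y v) =ᶠ[𝓝 z] fun v => v * c (y / v) 1 := by
    filter_upwards [eventually_gt_nhds hz] with v hv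
    have := hC.homog hv (div_pos hy hv) one_pos
    rw [mul_div_cancel₀ _ (ne_of_gt hv), mul_one] at this
    simpa using this
  have h2 := (h1.congr_of_eventuallyEq heq).unique (hC.hderiv_z hy hz)
  rw [← h2]
  field_simp
  ring

lemma cyz_formula {c cy cz cyy cyz czz : ℝ → ℝ → ℝ} (hC : AssumptionC c cy cz cyy cyz czz)
    {y z : ℝ} (hy : 0 < y) (hz : 0 < z) :
    cyz y z = -(y / z ^ 2) * cyy (y / z) 1 := by
  have hx : 0 < y / z := div_pos hy hz
  have hlin : HasDerivAt (fun u : ℝ => u / z) (1 / z) y := by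
    simpa using (hasDerivAt_id y).div_const z
  have hA : HasDerivAt (fun u : ℝ => c (u / z) 1) (cy (y / z) 1 * (1 / z)) y :=
    by simpa [Function.comp_def] using (hC.hderiv_y hx one_pos).comp y hlin
  have hB : HasDerivAt (fun u : ℝ => cy (u / z) 1) (cyy (y / z) 1 * (1 / z)) y :=
    by simpa [Function.comp_def] using (hC.hderiv_yy hx one_pos).comp y hlin
  have hC2 : HasDerivAt (fun u : ℝ => (u / z) * cy (u / z) 1)
      (1 / z * cy (y / z) 1 + (y / z) * (cyy (y / z) 1 * (1 / z))) y := hlin.mul hB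
  have h1 : HasDerivAt (fun u : ℝ => c (u / z) 1 - (u / z) * cy (u / z) 1)
      (cy (y / z) 1 * (1 / z) - (1 / z * cy (y / z) 1 + (y / z) * (cyy (y / z) 1 * (1 / z)))) y :=
    hA.sub hC2
  have heq : (fun u : ℝ => cz u z) =ᶠ[𝓝 y] fun u => c (u / z) 1 - (u / z) * cy (u / z) 1 := by
    filter_upwards [eventually_gt_nhds hy] with u hu
    exact cz_euler hC hu hz
  have h2 := ((h1.congr_of_eventuallyEq heq)).unique (hC.hderiv_zy hy hz)
  rw [← h2]
  field_simp
  ring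

set_option maxHeartbeats 1000000 in
/-- Eigenvalue computation at the bubbly steady state: with `s = (w_b^*−w)/(w_b^*+1)`,
`(y,z) = (1−s, G(w+s))`, `x = y/z`, `g u = c(u,1)`, `ε = c_y·c_z/(c·c_yz)`,
`n = g'(x) − (s(1+w)/(G(w+s)²))·g''(x)` and `d = g'(x) + (s(1−s)(1+w)/(G(w+s)³))·g''(x)`:
(a) `n = (1 + (1/ε)·s/(1−s))·g'(x)` and `d = (1 − (1/ε)·s/(w+s))·g'(x)`; (b) `n > d`;
(c) `d = 0 ↔ ε = (1−w/w_b^*)/(1+w)`; (d) under the EIS condition, `d ≠ 0` and `|n/d| > 1`. -/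
theorem stmt_16 (c cy cz cyy cyz czz : ℝ → ℝ → ℝ)
    (hC : AssumptionC c cy cz cyy cyz czz) (G w wb : ℝ)
    (hG : 1 < G) (hw : 0 < w)
    (hwb0 : 0 < wb) (hwb : cy 1 (G * wb) / cz 1 (G * wb) = G) (hwwb : w < wb)
    (s y z x ε n d : ℝ)
    (hs : s = (wb - w) / (wb + 1)) (hy : y = 1 - s) (hz : z = G * (w + s)) (hx : x = y / z)
    (hε : ε = cy y z * cz y z / (c y z * cyz y z))
    (hn : n = deriv (fun u => c u 1) x -
      s * (1 + w) / (G * (w + s) ^ 2) * deriv (deriv (fun u => c u 1)) x)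
    (hd : d = deriv (fun u => c u 1) x +
      s * (1 - s) * (1 + w) / (G * (w + s) ^ 3) * deriv (deriv (fun u => c u 1)) x) :
    s ∈ Ioo (0:ℝ) 1 ∧
    (n = (1 + (1 / ε) * (s / (1 - s))) * deriv (fun u => c u 1) x ∧
     d = (1 - (1 / ε) * (s / (w + s))) * deriv (fun u => c u 1) x) ∧
    d < n ∧
    (d = 0 ↔ ε = (1 - w / wb) / (1 + w)) ∧
    (((1 - wb) / 2 * ((1 - w / wb) / (1 + w)) < ε ∧ ε ≠ (1 - w / wb) / (1 + w)) →
      d ≠ 0 ∧ 1 < |n / d|) := by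
  -- basic positivity
  have hwb1 : (0:ℝ) < wb + 1 := by linarith
  have hs0 : 0 < s := by rw [hs]; exact div_pos (by linarith) hwb1
  have hs1 : s < 1 := by rw [hs, div_lt_one hwb1]; linarith
  have h1s0 : 0 < 1 - s := by linarith
  have hy0 : 0 < y := by rw [hy]; linarith
  have hws : 0 < w + s := by linarith
  have hG0 : 0 < G := by linarith
  have hz0 : 0 < z := by rw [hz]; positivity
  have hx0 : 0 < x := by rw [hx]; exact div_pos hy0 hz0
  have hzne : z ≠ 0 := ne_of_gt hz0
  have hGne : G ≠ 0 := ne_of_gt hG0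
  have hwsne : w + s ≠ 0 := ne_of_gt hws
  have h1sne : (1:ℝ) - s ≠ 0 := ne_of_gt h1s0
  have hxne : x ≠ 0 := ne_of_gt hx0
  set P := cy x 1 with hPdef
  set Q := c x 1 with hQdef
  set R := cyy x 1 with hRdef
  have hPpos : 0 < P := hC.cy_pos hx0 one_pos
  have hQpos : 0 < Q := hC.c_pos hx0 one_pos
  have hRneg : R < 0 := hC.cyy_neg hx0 one_pos
  have hPne : P ≠ 0 := ne_of_gt hPpos
  have hRne : R ≠ 0 := ne_of_lt hRneg
  have hyx : y = z * x := by rw [hx]; field_simp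
  -- values at (y, z)
  have hcyv : cy y z = P := by
    have h := cy_homog0 hC hz0 hx0 one_pos
    rw [mul_one] at h
    rw [hyx]; exact h
  have hczv : cz y z = Q - x * P := by
    rw [cz_euler hC hy0 hz0, ← hx]
  have hcval : c y z = z * Q := by
    have h := hC.homog hz0 hx0 one_pos
    rw [mul_one] at h
    rw [hyx]; exact h
  have hcyzv : cyz y z = -(x / z) * R := by
    rw [cyz_formula hC hy0 hz0, ← hx]
    have hyz2 : y / z ^ 2 = x / z := by rw [hx, div_div, sq]
    rw [hyz2]
  -- steady-state relation
  have hwz : w + s = wb * (1 - s) := by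
    rw [hs]; field_simp; ring
  have hGwb : 0 < G * wb := by positivity
  have hzyw : z = y * (G * wb) := by rw [hz, hwz, hy]; ring
  have hcy1 : cy y z = cy 1 (G * wb) := by
    have h := cy_homog0 hC hy0 one_pos hGwb
    rw [mul_one] at h
    rw [hzyw]; exact h
  have hcz1 : cz y z = cz 1 (G * wb) := by
    have h := cz_homog0 hC hy0 one_pos hGwb
    rw [mul_one] at h
    rw [hzyw]; exact h
  have hczpos' : 0 < cz 1 (G * wb) := hC.cz_pos one_pos hGwb
  have hGrel : P = G * (Q - x * P) := by
    have h := (div_eq_iff (ne_of_gt hczpos')).mp hwb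
    calc P = cy 1 (G * wb) := by rw [← hcyv, hcy1]
    _ = G * cz 1 (G * wb) := h
    _ = G * (Q - x * P) := by rw [← hcz1, hczv]
  have hQv : Q = P / G + x * P := by
    field_simp
    linarith [hGrel]
  -- derivatives of g
  have hgP : deriv (fun u => c u 1) x = P := (hC.hderiv_y hx0 one_pos).deriv
  have hgR : deriv (deriv (fun u => c u 1)) x = R := by
    have hev : deriv (fun u => c u 1) =ᶠ[𝓝 x] fun u => cy u 1 := by
      filter_upwards [eventually_gt_nhds hx0] with u hu
      exact (hC.hderiv_y hu one_pos).deriv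
    rw [hev.deriv_eq]
    exact (hC.hderiv_yy hx0 one_pos).deriv
  -- epsilon
  have hxGx : 0 < 1 + G * x := by positivity
  have hxGxne : (1:ℝ) + G * x ≠ 0 := ne_of_gt hxGx
  set K := -(x * (1 + G * x) * R) with hK
  clear_value K
  clear_value P Q R
  have hKpos : 0 < K := by
    rw [hK]
    have h := mul_neg_of_pos_of_neg (mul_pos hx0 hxGx) hRneg
    linarith
  have hKne : K ≠ 0 := ne_of_gt hKpos
  have hεv : ε = P / K := by
    rw [hε, hcyv, hczv, hcval, hcyzv, hK, hQv]
    field_simp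
    ring
  have hεpos : 0 < ε := by rw [hεv]; positivity
  have hεne : ε ≠ 0 := ne_of_gt hεpos
  have hinv : 1 / ε = K / P := by rw [hεv, one_div_div]
  have hxv : x = (1 - s) / (G * (w + s)) := by rw [hx, hy, hz]
  -- (a)
  have hna : n = (1 + 1 / ε * (s / (1 - s))) * P := by
    rw [hn, hgP, hgR, hinv, hK, hxv]
    field_simp
    ring
  have hdb : d = (1 - 1 / ε * (s / (w + s))) * P := by
    rw [hd, hgP, hgR, hinv, hK, hxv]
    field_simp
    ring
  -- (b)
  have hdn : d < n := by
    rw [hn, hd, hgP, hgR]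
    have h1 : 0 < s * (1 + w) / (G * (w + s) ^ 2) := by positivity
    have h2 : 0 < s * (1 - s) * (1 + w) / (G * (w + s) ^ 3) := by positivity
    have hm1 := mul_neg_of_pos_of_neg h1 hRneg
    have hm2 := mul_neg_of_pos_of_neg h2 hRneg
    linarith
  -- (c)
  have hwbne : wb ≠ 0 := ne_of_gt hwb0
  have h1w : (0:ℝ) < 1 + w := by linarith
  have h1wne : (1:ℝ) + w ≠ 0 := ne_of_gt h1w
  have he0 : (1 - w / wb) / (1 + w) = s / (w + s) := by
    have h1ms : 1 - s = (1 + w) / (wb + 1) := by rw [hs]; field_simp; ring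
    have hwssub : w + s = wb * (1 + w) / (wb + 1) := by rw [hwz, h1ms]; ring
    have hden : wb * (1 + w) ≠ 0 := by positivity
    rw [hwssub, hs]
    field_simp
  have hA : 0 < s / (w + s) := div_pos hs0 hws
  have hiff : d = 0 ↔ ε = (1 - w / wb) / (1 + w) := by
    rw [he0]
    constructor
    · intro h0
      rw [hdb] at h0
      have h1 := (mul_eq_zero.mp h0).resolve_right hPne
      field_simp at h1 ⊢
      linarith
    · intro hε0
      rw [hdb]
      have hfac : 1 - 1 / ε * (s / (w + s)) = 0 := by
        rw [hε0]
        field_simp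
        norm_num
      rw [hfac, zero_mul]
  -- clean forms
  have hn2 : n = P + K * (s / (1 - s)) := by
    rw [hna, hinv]; field_simp
  have hd2 : d = P - K * (s / (w + s)) := by
    rw [hdb, hinv]; field_simp
  have hPK : P = ε * K := by rw [hεv]; field_simp
  have hid : s / (1 - s) = wb * (s / (w + s)) := by
    rw [hwz]; field_simp
  refine ⟨⟨hs0, hs1⟩, ⟨by rw [hgP]; exact hna, by rw [hgP]; exact hdb⟩, hdn, hiff, ?_⟩
  rintro ⟨hlt, hne⟩
  have hd0 : d ≠ 0 := fun h => hne (hiff.mp h)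
  refine ⟨hd0, ?_⟩
  have hlt' : (1 - wb) / 2 * (s / (w + s)) < ε := by rwa [he0] at hlt
  have hnpos : 0 < n := by
    rw [hn2]
    have := mul_pos hKpos (div_pos hs0 h1s0)
    linarith
  have hnpd : 0 < n + d := by
    have hsum : n + d = K * (2 * ε + (wb - 1) * (s / (w + s))) := by
      rw [hn2, hd2, hid, hPK]; ring
    rw [hsum]
    exact mul_pos hKpos (by linarith)
  have habs : |d| < n := abs_lt.mpr ⟨by linarith, hdn⟩
  rw [abs_div, lt_div_iff₀ (abs_pos.mpr hd0), one_mul]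
  exact habs.trans_le (le_abs_self n)
end

section
/- (Equilibrium with elasticity of substitution below 1.) Suppose γ > 1. Then every equilibrium (S_t) satisfies: S_t/(e1·G^t) → 1, r_t/(e1·G^t) → 1, P_t/(e1·G^t) → 0, R_t → ∞, and the price-rent ratio P_t/r_t → 0. -/
open Real Filter Set Topology

/-- An equilibrium: `0 < S t < e1·G^t` and the difference equation
`S_{t+1}·c_z = S_t·c_y − m·c^γ` at `(y_t, z_t) = (e1·G^t − S_t, e2·G^{t+1} + S_{t+1})`. -/
def IsEquilibrium (c cy cz : ℝ → ℝ → ℝ) (e1 e2 G γ m : ℝ) (S : ℕ → ℝ) : Prop :=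
  ∀ t : ℕ, 0 < S t ∧ S t < e1 * G ^ t ∧
    S (t + 1) * cz (e1 * G ^ t - S t) (e2 * G ^ (t + 1) + S (t + 1)) =
      S t * cy (e1 * G ^ t - S t) (e2 * G ^ (t + 1) + S (t + 1)) -
        m * c (e1 * G ^ t - S t) (e2 * G ^ (t + 1) + S (t + 1)) ^ γ

/-- The rent `r_t = m·c(y_t,z_t)^γ / c_y(y_t,z_t)`. -/
noncomputable def rent (c cy : ℝ → ℝ → ℝ) (e1 e2 G γ m : ℝ) (S : ℕ → ℝ) (t : ℕ) : ℝ :=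
  m * c (e1 * G ^ t - S t) (e2 * G ^ (t + 1) + S (t + 1)) ^ γ /
    cy (e1 * G ^ t - S t) (e2 * G ^ (t + 1) + S (t + 1))

/-- The housing price `P_t = S_t − r_t`. -/
noncomputable def price (c cy : ℝ → ℝ → ℝ) (e1 e2 G γ m : ℝ) (S : ℕ → ℝ) (t : ℕ) : ℝ :=
  S t - rent c cy e1 e2 G γ m S t

/-- The gross interest rate `R_t = S_{t+1}/P_t`. -/
noncomputable def irate (c cy : ℝ → ℝ → ℝ) (e1 e2 G γ m : ℝ) (S : ℕ → ℝ) (t : ℕ) : ℝ :=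
  S (t + 1) / price c cy e1 e2 G γ m S t

section Aux

variable {c cy cz cyy cyz czz : ℝ → ℝ → ℝ}

lemma cy_homog (hC : AssumptionC c cy cz cyy cyz czz) {l y z : ℝ}
    (hl : 0 < l) (hy : 0 < y) (hz : 0 < z) : cy (l*y) (l*z) = cy y z := by
  have hinner : HasDerivAt (fun u : ℝ => l * u) l y := by
    simpa using (hasDerivAt_id y).const_mul l
  have h1 : HasDerivAt (fun u => c (l*u) (l*z)) (cy (l*y) (l*z) * l) y :=
    (hC.hderiv_y (mul_pos hl hy) (mul_pos hl hz)).comp y hinner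
  have h2 : HasDerivAt (fun u => l * c u z) (l * cy y z) y :=
    (hC.hderiv_y hy hz).const_mul l
  have heq : (fun u => c (l*u) (l*z)) =ᶠ[𝓝 y] (fun u => l * c u z) := by
    filter_upwards [Ioi_mem_nhds hy] with u hu
    exact hC.homog hl hu hz
  have hu := (h2.congr_of_eventuallyEq heq).unique h1
  exact mul_right_cancel₀ hl.ne' (by linarith [hu] : cy (l*y) (l*z) * l = cy y z * l)

lemma cz_homog (hC : AssumptionC c cy cz cyy cyz czz) {l y z : ℝ}
    (hl : 0 < l) (hy : 0 < y) (hz : 0 < z) : cz (l*y) (l*z) = cz y z := by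
  have hinner : HasDerivAt (fun v : ℝ => l * v) l z := by
    simpa using (hasDerivAt_id z).const_mul l
  have h1 : HasDerivAt (fun v => c (l*y) (l*v)) (cz (l*y) (l*z) * l) z :=
    (hC.hderiv_z (mul_pos hl hy) (mul_pos hl hz)).comp z hinner
  have h2 : HasDerivAt (fun v => l * c y v) (l * cz y z) z :=
    (hC.hderiv_z hy hz).const_mul l
  have heq : (fun v => c (l*y) (l*v)) =ᶠ[𝓝 z] (fun v => l * c y v) := by
    filter_upwards [Ioi_mem_nhds hz] with v hv
    exact hC.homog hl hy hv
  have hu := (h2.congr_of_eventuallyEq heq).unique h1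
  exact mul_right_cancel₀ hl.ne' (by linarith [hu] : cz (l*y) (l*z) * l = cz y z * l)

lemma c_scale (hC : AssumptionC c cy cz cyy cyz czz) {y z : ℝ} (hy : 0 < y) (hz : 0 < z) :
    c y z = z * c (y/z) 1 := by
  have := hC.homog hz (div_pos hy hz) one_pos
  rwa [mul_div_cancel₀ _ hz.ne', mul_one] at this

lemma cy_scale (hC : AssumptionC c cy cz cyy cyz czz) {y z : ℝ} (hy : 0 < y) (hz : 0 < z) :
    cy y z = cy (y/z) 1 := by
  have := cy_homog hC hz (div_pos hy hz) one_pos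
  rwa [mul_div_cancel₀ _ hz.ne', mul_one] at this

lemma cz_scale (hC : AssumptionC c cy cz cyy cyz czz) {y z : ℝ} (hy : 0 < y) (hz : 0 < z) :
    cz y z = cz (y/z) 1 := by
  have := cz_homog hC hz (div_pos hy hz) one_pos
  rwa [mul_div_cancel₀ _ hz.ne', mul_one] at this

lemma cyz_one_pos (hC : AssumptionC c cy cz cyy cyz czz) {u : ℝ} (hu : 0 < u) :
    0 < cyz u 1 := by
  have hinner : HasDerivAt (fun z : ℝ => u / z) (-u) 1 := by
    simpa [div_eq_mul_inv] using ((hasDerivAt_inv (one_ne_zero)).const_mul u)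
  have houter : HasDerivAt (fun v => cy v 1) (cyy (u/1) 1) (u/1) :=
    hC.hderiv_yy (by simpa using hu) one_pos
  have h1 : HasDerivAt (fun z : ℝ => cy (u/z) 1) (cyy (u/1) 1 * (-u)) 1 :=
    houter.comp 1 hinner
  have h2 : HasDerivAt (fun z => cy u z) (cyz u 1) 1 := hC.hderiv_yz hu one_pos
  have heq : (fun z : ℝ => cy u z) =ᶠ[𝓝 (1:ℝ)] (fun z => cy (u/z) 1) := by
    filter_upwards [Ioi_mem_nhds (one_pos : (0:ℝ) < 1)] with z hz
    exact cy_scale hC hu hz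
  have huniq := (h1.congr_of_eventuallyEq heq).unique h2
  have hyy := hC.cyy_neg hu one_pos
  rw [div_one] at huniq
  nlinarith [hyy]

lemma anti_aux {f f' : ℝ → ℝ} (hd : ∀ x : ℝ, 0 < x → HasDerivAt f (f' x) x)
    (hneg : ∀ x : ℝ, 0 < x → f' x ≤ 0) : AntitoneOn f (Ioi 0) := by
  apply antitoneOn_of_deriv_nonpos (convex_Ioi 0)
  · exact fun x hx => ((hd x hx).continuousAt).continuousWithinAt
  · rw [interior_Ioi]
    exact fun x hx => ((hd x hx).differentiableAt).differentiableWithinAt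
  · rw [interior_Ioi]
    intro x hx
    rw [(hd x hx).deriv]
    exact hneg x hx

lemma mono_aux {f f' : ℝ → ℝ} (hd : ∀ x : ℝ, 0 < x → HasDerivAt f (f' x) x)
    (hpos : ∀ x : ℝ, 0 < x → 0 ≤ f' x) : MonotoneOn f (Ioi 0) := by
  apply monotoneOn_of_deriv_nonneg (convex_Ioi 0)
  · exact fun x hx => ((hd x hx).continuousAt).continuousWithinAt
  · rw [interior_Ioi]
    exact fun x hx => ((hd x hx).differentiableAt).differentiableWithinAt
  · rw [interior_Ioi]
    intro x hx
    rw [(hd x hx).deriv]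
    exact hpos x hx

lemma pow_rpow_split {G : ℝ} (hG : 0 < G) (t : ℕ) (γ : ℝ) :
    ((G:ℝ)^t) ^ γ = (G ^ (γ-1))^t * G^t := by
  have h1 : ((t:ℝ))*γ = (γ-1)*(t:ℝ) + (t:ℝ) := by ring
  rw [← Real.rpow_natCast G t, ← Real.rpow_mul hG.le, h1, Real.rpow_add hG,
    Real.rpow_mul hG.le, Real.rpow_natCast, Real.rpow_natCast]

end Aux

/-- Equilibrium with elasticity of substitution below 1 (`γ > 1`): in every equilibrium,
`S_t/(e1·G^t) → 1`, `r_t/(e1·G^t) → 1`, `P_t/(e1·G^t) → 0`, `R_t → ∞`, and the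
price-rent ratio `P_t/r_t → 0`. -/
theorem stmt_17 (c cy cz cyy cyz czz : ℝ → ℝ → ℝ)
    (hC : AssumptionC c cy cz cyy cyz czz) (e1 e2 G γ m : ℝ)
    (he1 : 0 < e1) (he2 : 0 < e2) (hG : 1 < G) (hγ : 1 < γ) (hm : 0 < m)
    (S : ℕ → ℝ) (hS : IsEquilibrium c cy cz e1 e2 G γ m S) :
    Tendsto (fun t : ℕ => S t / (e1 * G ^ t)) atTop (𝓝 1) ∧
    Tendsto (fun t : ℕ => rent c cy e1 e2 G γ m S t / (e1 * G ^ t)) atTop (𝓝 1) ∧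
    Tendsto (fun t : ℕ => price c cy e1 e2 G γ m S t / (e1 * G ^ t)) atTop (𝓝 0) ∧
    Tendsto (fun t : ℕ => irate c cy e1 e2 G γ m S t) atTop atTop ∧
    Tendsto (fun t : ℕ => price c cy e1 e2 G γ m S t / rent c cy e1 e2 G γ m S t)
      atTop (𝓝 0) := by
  have hG0 : (0:ℝ) < G := lt_trans one_pos hG
  have hgen1 : ∀ a q b E : ℝ, b ≠ 0 → E ≠ 0 → (a * q) * b⁻¹ = ((a * E) * q)/(b * E) := by
    intro a q b E hb hE; field_simp
  have hgen2 : ∀ a p E : ℝ, E ≠ 0 → p ≠ 0 → (a/E) * (p/E)⁻¹ = a/p := by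
    intro a p E hE hp; field_simp
  have hgen3 : ∀ a b E : ℝ, E ≠ 0 → b ≠ 0 → (a/E)/(b/E) = a/b := by
    intro a b E hE hb; rw [div_div_div_comm, div_self hE, div_one]
  have hGt : ∀ t : ℕ, (0:ℝ) < G ^ t := fun t => pow_pos hG0 t
  have hegt : ∀ t : ℕ, (0:ℝ) < e1 * G ^ t := fun t => mul_pos he1 (hGt t)
  set Y : ℕ → ℝ := fun t => e1 * G ^ t - S t with hYdef
  set Z : ℕ → ℝ := fun t => e2 * G ^ (t+1) + S (t+1) with hZdef
  have hSpos : ∀ t, 0 < S t := fun t => (hS t).1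
  have hSlt : ∀ t, S t < e1 * G ^ t := fun t => (hS t).2.1
  have hYpos : ∀ t, 0 < Y t := fun t => sub_pos.2 (hSlt t)
  have hZpos : ∀ t, 0 < Z t := fun t => add_pos (mul_pos he2 (hGt (t+1))) (hSpos (t+1))
  set u : ℕ → ℝ := fun t => Y t / Z t with hudef
  have hupos : ∀ t, 0 < u t := fun t => div_pos (hYpos t) (hZpos t)
  set g : ℝ → ℝ := fun v => cy v 1 with hgdef
  set h : ℝ → ℝ := fun v => cz v 1 with hhdef
  set k : ℝ → ℝ := fun v => c v 1 with hkdef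
  have hgpos : ∀ t, 0 < g (u t) := fun t => hC.cy_pos (hupos t) one_pos
  have hhpos : ∀ t, 0 < h (u t) := fun t => hC.cz_pos (hupos t) one_pos
  have hkpos : ∀ t, 0 < k (u t) := fun t => hC.c_pos (hupos t) one_pos
  have hceq : ∀ t, c (Y t) (Z t) = Z t * k (u t) := fun t => c_scale hC (hYpos t) (hZpos t)
  have hcyeq : ∀ t, cy (Y t) (Z t) = g (u t) := fun t => cy_scale hC (hYpos t) (hZpos t)
  have hczeq : ∀ t, cz (Y t) (Z t) = h (u t) := fun t => cz_scale hC (hYpos t) (hZpos t)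
  have heqn : ∀ t, S (t+1) * h (u t) = S t * g (u t) - m * (Z t * k (u t)) ^ γ := by
    intro t
    have h0 := (hS t).2.2
    rw [show e1 * G ^ t - S t = Y t from rfl,
        show e2 * G ^ (t+1) + S (t+1) = Z t from rfl] at h0
    rw [hceq t, hcyeq t, hczeq t] at h0
    exact h0
  -- monotonicity of g, h, k on (0, ∞)
  have hganti : AntitoneOn g (Ioi 0) :=
    anti_aux (fun x hx => hC.hderiv_yy hx one_pos) (fun x hx => (hC.cyy_neg hx one_pos).le)
  have hhmono : MonotoneOn h (Ioi 0) :=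
    mono_aux (fun x hx => hC.hderiv_zy hx one_pos) (fun x hx => (cyz_one_pos hC hx).le)
  have hkmono : MonotoneOn k (Ioi 0) :=
    mono_aux (fun x hx => hC.hderiv_y hx one_pos) (fun x hx => (hC.cy_pos hx one_pos).le)
  -- bounds on Z and u
  have hZlb : ∀ t, G * e2 * G^t ≤ Z t := by
    intro t
    show G * e2 * G^t ≤ e2 * G ^ (t+1) + S (t+1)
    rw [pow_succ]
    nlinarith [hSpos (t+1)]
  have hZub : ∀ t, Z t ≤ G * (e2 + e1) * G^t := by
    intro t
    show e2 * G ^ (t+1) + S (t+1) ≤ G * (e2 + e1) * G^t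
    have := hSlt (t+1)
    rw [pow_succ] at this ⊢
    nlinarith
  have huK : ∀ t, u t < e1 / (G * e2) := by
    intro t
    have hd : (0:ℝ) < G * e2 * G^t := by positivity
    calc u t ≤ Y t / (G * e2 * G^t) :=
          div_le_div_of_nonneg_left (hYpos t).le hd (hZlb t)
      _ < (e1 * G^t) / (G * e2 * G^t) := by
          apply (div_lt_div_iff_of_pos_right hd).2
          have := hSpos t
          show e1 * G ^ t - S t < e1 * G ^ t
          linarith
      _ = e1 / (G * e2) := by
          field_simp
  -- key: u t → 0
  have hbase : 1 < G ^ (γ - 1) :=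
    (Real.one_lt_rpow_iff_of_pos hG0).2 (Or.inl ⟨hG, by linarith⟩)
  have key : ∀ ε : ℝ, 0 < ε → ∀ᶠ t : ℕ in atTop, u t < ε := by
    intro ε hε
    have hkε : 0 < k ε := hC.c_pos hε one_pos
    have hgε : 0 < g ε := hC.cy_pos hε one_pos
    have hCpos : 0 < m * (G*e2)^γ * k ε ^ γ := by
      have h1 : (0:ℝ) < (G*e2)^γ := Real.rpow_pos_of_pos (by positivity) γ
      have h2 : (0:ℝ) < k ε ^ γ := Real.rpow_pos_of_pos hkε γ
      positivity
    have hlim : Tendsto (fun t : ℕ => (m * (G*e2)^γ * k ε ^ γ) * (G^(γ-1))^t) atTop atTop :=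
      (tendsto_pow_atTop_atTop_of_one_lt hbase).const_mul_atTop hCpos
    filter_upwards [hlim.eventually_gt_atTop (e1 * g ε)] with t ht
    by_contra hcon
    push_neg at hcon
    have hεmem : ε ∈ Ioi (0:ℝ) := hε
    have humem : u t ∈ Ioi (0:ℝ) := hupos t
    have hgle : g (u t) ≤ g ε := hganti hεmem humem hcon
    have hkle : k ε ≤ k (u t) := hkmono hεmem humem hcon
    have hlt : m * (Z t * k (u t))^γ < e1 * G^t * g ε := by
      have h1 : m * (Z t * k (u t))^γ = S t * g (u t) - S (t+1) * h (u t) := by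
        linarith [heqn t]
      have h2 : S t * g (u t) ≤ S t * g ε := mul_le_mul_of_nonneg_left hgle (hSpos t).le
      have h3 : S t * g ε < (e1 * G^t) * g ε := mul_lt_mul_of_pos_right (hSlt t) hgε
      have h4 : 0 < S (t+1) * h (u t) := mul_pos (hSpos _) (hhpos t)
      linarith
    have hlb : G*e2*G^t * k ε ≤ Z t * k (u t) :=
      mul_le_mul (hZlb t) hkle hkε.le (hZpos t).le
    have hlb2 : (G*e2*G^t * k ε)^γ ≤ (Z t * k (u t))^γ :=
      Real.rpow_le_rpow (by positivity) hlb (by linarith)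
    have hexp : (G*e2*G^t * k ε)^γ = (G*e2)^γ * ((G^(γ-1))^t * G^t) * k ε ^ γ := by
      rw [Real.mul_rpow (by positivity) hkε.le, Real.mul_rpow (by positivity) (hGt t).le,
        pow_rpow_split hG0]
    have hA : (m * (G*e2)^γ * k ε ^ γ) * (G^(γ-1))^t * G^t ≤ m * (Z t * k (u t))^γ := by
      calc (m * (G*e2)^γ * k ε ^ γ) * (G^(γ-1))^t * G^t
          = m * ((G*e2)^γ * ((G^(γ-1))^t * G^t) * k ε ^ γ) := by ring
        _ = m * (G*e2*G^t * k ε)^γ := by rw [hexp]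
        _ ≤ m * (Z t * k (u t))^γ := mul_le_mul_of_nonneg_left hlb2 hm.le
    have hfin : (m * (G*e2)^γ * k ε ^ γ) * (G^(γ-1))^t * G^t < (e1 * g ε) * G^t := by
      calc (m * (G*e2)^γ * k ε ^ γ) * (G^(γ-1))^t * G^t
          ≤ m * (Z t * k (u t))^γ := hA
        _ < e1 * G^t * g ε := hlt
        _ = (e1 * g ε) * G^t := by ring
    have hdiv := lt_of_mul_lt_mul_right hfin (hGt t).le
    linarith
  have hu0 : Tendsto u atTop (𝓝[>] (0:ℝ)) := by
    rw [tendsto_nhdsWithin_iff]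
    refine ⟨?_, Eventually.of_forall (fun t => hupos t)⟩
    rw [tendsto_order]
    constructor
    · intro a ha
      exact Eventually.of_forall (fun t => lt_trans ha (hupos t))
    · intro a ha
      exact key a ha
  have hu0' : Tendsto u atTop (𝓝 0) := hu0.mono_right nhdsWithin_le_nhds
  have hglim : Tendsto (fun t => g (u t)) atTop atTop := (hC.inada_y one_pos).comp hu0
  -- S t / (e1 G^t) → 1
  have hYfrac : Tendsto (fun t => Y t / (e1*G^t)) atTop (𝓝 0) := by
    apply squeeze_zero (fun t => (div_pos (hYpos t) (hegt t)).le)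
      (g := fun t => (G*(e2+e1)/e1) * u t)
    · intro t
      have h1 : Y t/(e1*G^t) = (Z t/(e1*G^t)) * u t := by
        show Y t/(e1*G^t) = (Z t/(e1*G^t)) * (Y t / Z t)
        rw [div_mul_div_comm, mul_comm (Z t) (Y t), mul_div_mul_right _ _ (hZpos t).ne']
      rw [h1]
      apply mul_le_mul_of_nonneg_right _ (hupos t).le
      rw [div_le_div_iff₀ (hegt t) he1]
      nlinarith [hZub t, hGt t]
    · simpa using hu0'.const_mul (G*(e2+e1)/e1)
  have hs1 : Tendsto (fun t : ℕ => S t / (e1 * G ^ t)) atTop (𝓝 1) := by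
    have hpt : ∀ t, S t/(e1*G^t) = 1 - Y t/(e1*G^t) := by
      intro t
      show S t/(e1*G^t) = 1 - (e1 * G ^ t - S t)/(e1*G^t)
      field_simp
      ring
    have := (tendsto_const_nhds (x := (1:ℝ)) (f := atTop)).sub hYfrac
    simp only [sub_zero] at this
    exact this.congr (fun t => (hpt t).symm)
  -- price identity
  have hprice_eq : ∀ t, price c cy e1 e2 G γ m S t = S (t+1) * h (u t) / g (u t) := by
    intro t
    have h0 := heqn t
    show S t - rent c cy e1 e2 G γ m S t = _
    rw [rent, show e1 * G ^ t - S t = Y t from rfl,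
        show e2 * G ^ (t+1) + S (t+1) = Z t from rfl, hceq t, hcyeq t]
    rw [eq_div_iff (hgpos t).ne', sub_mul, div_mul_cancel₀ _ (hgpos t).ne']
    linarith
  have hprice_pos : ∀ t, 0 < price c cy e1 e2 G γ m S t := by
    intro t
    rw [hprice_eq t]
    exact div_pos (mul_pos (hSpos _) (hhpos t)) (hgpos t)
  -- price/(e1 G^t) → 0
  have hKpos : (0:ℝ) < e1 / (G*e2) := by positivity
  have hPfrac : Tendsto (fun t : ℕ => price c cy e1 e2 G γ m S t / (e1 * G ^ t)) atTop (𝓝 0) := by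
    apply squeeze_zero (fun t => (div_pos (hprice_pos t) (hegt t)).le)
      (g := fun t => (G * h (e1/(G*e2))) * (g (u t))⁻¹)
    · intro t
      rw [hprice_eq t]
      have hhK : h (u t) ≤ h (e1/(G*e2)) :=
        hhmono (hupos t) hKpos (huK t).le
      have h1 : S (t+1) * h (u t) ≤ (G * (e1*G^t)) * h (e1/(G*e2)) := by
        apply mul_le_mul _ hhK (hhpos t).le (by positivity)
        have := hSlt (t+1)
        rw [pow_succ] at this
        nlinarith
      rw [div_div, hgen1 G (h (e1/(G*e2))) (g (u t)) (e1*G^t) (hgpos t).ne' (hegt t).ne']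
      gcongr
      exact (mul_pos (hgpos t) (hegt t)).le
    · have := (hglim.inv_tendsto_atTop).const_mul (G * h (e1/(G*e2)))
      simpa using this
  -- rent/(e1 G^t) → 1
  have hrent1 : Tendsto (fun t : ℕ => rent c cy e1 e2 G γ m S t / (e1 * G ^ t)) atTop (𝓝 1) := by
    have hpt : ∀ t, rent c cy e1 e2 G γ m S t / (e1*G^t)
        = S t/(e1*G^t) - price c cy e1 e2 G γ m S t/(e1*G^t) := by
      intro t
      rw [price]
      ring
    have := hs1.sub hPfrac
    simp only [sub_zero] at this
    exact this.congr (fun t => (hpt t).symm)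
  -- irate → ∞
  have hrentpos : ∀ t, 0 < rent c cy e1 e2 G γ m S t := by
    intro t
    rw [rent, show e1 * G ^ t - S t = Y t from rfl,
        show e2 * G ^ (t+1) + S (t+1) = Z t from rfl, hcyeq t]
    exact div_pos (mul_pos hm (Real.rpow_pos_of_pos (hC.c_pos (hYpos t) (hZpos t)) γ)) (hgpos t)
  have hS1' : Tendsto (fun t : ℕ => S (t+1) / (e1 * G ^ t)) atTop (𝓝 G) := by
    have hcomp : Tendsto (fun t : ℕ => S (t+1)/(e1*G^(t+1))) atTop (𝓝 1) :=
      hs1.comp (tendsto_add_atTop_nat 1)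
    have hpt : ∀ t : ℕ, S (t+1)/(e1*G^t) = G * (S (t+1)/(e1*G^(t+1))) := by
      intro t
      rw [pow_succ]
      field_simp
    have := hcomp.const_mul G
    simp only [mul_one] at this
    exact this.congr (fun t => (hpt t).symm)
  have hB0 : Tendsto (fun t : ℕ => price c cy e1 e2 G γ m S t / (e1 * G ^ t)) atTop (𝓝[>] 0) :=
    tendsto_nhdsWithin_iff.2 ⟨hPfrac, Eventually.of_forall (fun t => div_pos (hprice_pos t) (hegt t))⟩
  have hBinv : Tendsto (fun t : ℕ => (price c cy e1 e2 G γ m S t / (e1 * G ^ t))⁻¹) atTop atTop :=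
    hB0.inv_tendsto_nhdsGT_zero
  have hirate : Tendsto (fun t : ℕ => irate c cy e1 e2 G γ m S t) atTop atTop := by
    have := hS1'.pos_mul_atTop hG0 hBinv
    apply this.congr
    intro t
    rw [irate, hgen2 (S (t+1)) (price c cy e1 e2 G γ m S t) (e1*G^t) (hegt t).ne' (hprice_pos t).ne']
  -- price/rent → 0
  have hratio : Tendsto (fun t : ℕ => price c cy e1 e2 G γ m S t / rent c cy e1 e2 G γ m S t)
      atTop (𝓝 0) := by
    have := hPfrac.div hrent1 one_ne_zero
    simp only [zero_div] at this
    apply this.congr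
    intro t
    simp only [Pi.div_apply]
    rw [hgen3 (price c cy e1 e2 G γ m S t) (rent c cy e1 e2 G γ m S t) (e1*G^t) (hegt t).ne' (hrentpos t).ne']
  exact ⟨hs1, hrent1, hPfrac, hirate, hratio⟩
end

section
/- (Balanced growth path with log utility, γ = 1.) Let G > 1, e1, e2 > 0, m > 0, w := e2/e1, and let s* ∈ (0,1) be the unique solution of G·s*·c_z = s*·c_y − m·c at (y*,z*) := (1−s*, G·(w+s*)). Then the sequence S_t := s*·e1·G^t is an equilibrium (0 < S_t < e1·G^t and the difference equation with γ = 1 holds for all t), with r_t = m·(c/c_y)(y*,z*)·e1·G^t, P_t = (G·s*·c_z/c_y)(y*,z*)·e1·G^t, constant gross interest rate R_t = (c_y/c_z)(y*,z*) = G + m·c(y*,z*)/(s*·c_z(y*,z*)) > G, constant price-rent ratio P_t/r_t, and R^{−T}·P_T → 0 as T → ∞ (the transversality condition holds, so there is no housing bubble). -/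
open Real Filter Set Topology

/-- Equilibrium with log utility (`γ = 1`): `0 < S_t < e1·G^t` and
`S_{t+1}·c_z = S_t·c_y − m·c` at `(y_t,z_t) = (e1·G^t − S_t, e2·G^{t+1} + S_{t+1})`. -/
def IsEquilibrium1 (c cy cz : ℝ → ℝ → ℝ) (e1 e2 G m : ℝ) (S : ℕ → ℝ) : Prop :=
  ∀ t : ℕ, 0 < S t ∧ S t < e1 * G ^ t ∧
    S (t + 1) * cz (e1 * G ^ t - S t) (e2 * G ^ (t + 1) + S (t + 1)) =
      S t * cy (e1 * G ^ t - S t) (e2 * G ^ (t + 1) + S (t + 1)) -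
        m * c (e1 * G ^ t - S t) (e2 * G ^ (t + 1) + S (t + 1))

/-- The rent with log utility: `r_t = m·c(y_t,z_t)/c_y(y_t,z_t)`. -/
noncomputable def rent1 (c cy : ℝ → ℝ → ℝ) (e1 e2 G m : ℝ) (S : ℕ → ℝ) (t : ℕ) : ℝ :=
  m * c (e1 * G ^ t - S t) (e2 * G ^ (t + 1) + S (t + 1)) /
    cy (e1 * G ^ t - S t) (e2 * G ^ (t + 1) + S (t + 1))

/-- The housing price `P_t = S_t − r_t`. -/
noncomputable def price1 (c cy : ℝ → ℝ → ℝ) (e1 e2 G m : ℝ) (S : ℕ → ℝ) (t : ℕ) : ℝ :=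
  S t - rent1 c cy e1 e2 G m S t

/-- The gross interest rate `R_t = S_{t+1}/P_t`. -/
noncomputable def irate1 (c cy : ℝ → ℝ → ℝ) (e1 e2 G m : ℝ) (S : ℕ → ℝ) (t : ℕ) : ℝ :=
  S (t + 1) / price1 c cy e1 e2 G m S t

/-- Balanced growth path with log utility: `S_t = s*·e1·G^t` is an equilibrium, with
`r_t = m·(c/c_y)·e1·G^t`, `P_t = (G·s*·c_z/c_y)·e1·G^t`, constant gross interest rate
`R = c_y/c_z = G + m·c/(s*·c_z) > G`, constant price-rent ratio, and `R^{−T}·P_T → 0`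

(transversality holds: no housing bubble). -/
theorem stmt_19 (c cy cz cyy cyz czz : ℝ → ℝ → ℝ)
    (hC : AssumptionC c cy cz cyy cyz czz) (e1 e2 G m w sstar ys zs : ℝ)
    (he1 : 0 < e1) (he2 : 0 < e2) (hG : 1 < G) (hm : 0 < m)
    (hw : w = e2 / e1) (hys : ys = 1 - sstar) (hzs : zs = G * (w + sstar))
    (hsstar : sstar ∈ Ioo (0:ℝ) 1)
    (heq : G * sstar * cz ys zs = sstar * cy ys zs - m * c ys zs) :
    IsEquilibrium1 c cy cz e1 e2 G m (fun t => sstar * e1 * G ^ t) ∧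
    (∀ t : ℕ, rent1 c cy e1 e2 G m (fun t => sstar * e1 * G ^ t) t =
      m * (c ys zs / cy ys zs) * e1 * G ^ t) ∧
    (∀ t : ℕ, price1 c cy e1 e2 G m (fun t => sstar * e1 * G ^ t) t =
      G * sstar * cz ys zs / cy ys zs * e1 * G ^ t) ∧
    (∀ t : ℕ, irate1 c cy e1 e2 G m (fun t => sstar * e1 * G ^ t) t =
      cy ys zs / cz ys zs) ∧
    cy ys zs / cz ys zs = G + m * c ys zs / (sstar * cz ys zs) ∧
    G < cy ys zs / cz ys zs ∧
    (∀ t : ℕ, price1 c cy e1 e2 G m (fun t => sstar * e1 * G ^ t) t /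
        rent1 c cy e1 e2 G m (fun t => sstar * e1 * G ^ t) t =
      price1 c cy e1 e2 G m (fun t => sstar * e1 * G ^ t) 0 /
        rent1 c cy e1 e2 G m (fun t => sstar * e1 * G ^ t) 0) ∧
    Tendsto (fun T : ℕ => (cy ys zs / cz ys zs) ^ (-(T : ℝ)) *
      price1 c cy e1 e2 G m (fun t => sstar * e1 * G ^ t) T) atTop (𝓝 0) := by
  have hs0 : 0 < sstar := hsstar.1
  have hs1 : sstar < 1 := hsstar.2
  have hGpos : (0:ℝ) < G := lt_trans one_pos hG
  have hw0 : 0 < w := by rw [hw]; positivity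
  have hys0 : 0 < ys := by rw [hys]; linarith
  have hzs0 : 0 < zs := by rw [hzs]; positivity
  have hc0 : 0 < c ys zs := hC.c_pos hys0 hzs0
  have hcy0 : 0 < cy ys zs := hC.cy_pos hys0 hzs0
  have hcz0 : 0 < cz ys zs := hC.cz_pos hys0 hzs0
  have hl : ∀ t : ℕ, 0 < e1 * G ^ t := fun t => by positivity
  have hY : ∀ t : ℕ, e1 * G ^ t - sstar * e1 * G ^ t = e1 * G ^ t * ys := fun t => by
    rw [hys]; ring
  have hZ : ∀ t : ℕ, e2 * G ^ (t + 1) + sstar * e1 * G ^ (t + 1) = e1 * G ^ t * zs :=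
    fun t => by rw [hzs, hw]; field_simp; ring
  have hc : ∀ t : ℕ, c (e1 * G ^ t - sstar * e1 * G ^ t)
      (e2 * G ^ (t + 1) + sstar * e1 * G ^ (t + 1)) = e1 * G ^ t * c ys zs := fun t => by
    rw [hY t, hZ t]; exact hC.homog (hl t) hys0 hzs0
  have hcy : ∀ t : ℕ, cy (e1 * G ^ t - sstar * e1 * G ^ t)
      (e2 * G ^ (t + 1) + sstar * e1 * G ^ (t + 1)) = cy ys zs := fun t => by
    rw [hY t, hZ t]; exact cy_homog0 hC (hl t) hys0 hzs0
  have hcz : ∀ t : ℕ, cz (e1 * G ^ t - sstar * e1 * G ^ t)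
      (e2 * G ^ (t + 1) + sstar * e1 * G ^ (t + 1)) = cz ys zs := fun t => by
    rw [hY t, hZ t]; exact cz_homog0 hC (hl t) hys0 hzs0
  have hrent : ∀ t : ℕ, rent1 c cy e1 e2 G m (fun t => sstar * e1 * G ^ t) t =
      m * (c ys zs / cy ys zs) * e1 * G ^ t := by
    intro t
    simp only [rent1, hc t, hcy t]
    field_simp
  have hprice : ∀ t : ℕ, price1 c cy e1 e2 G m (fun t => sstar * e1 * G ^ t) t =
      G * sstar * cz ys zs / cy ys zs * e1 * G ^ t := by
    intro t
    have key : sstar - m * (c ys zs / cy ys zs) = G * sstar * cz ys zs / cy ys zs := by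
      field_simp
      linear_combination -heq
    have h2 : price1 c cy e1 e2 G m (fun t => sstar * e1 * G ^ t) t =
        (sstar - m * (c ys zs / cy ys zs)) * e1 * G ^ t := by
      simp only [price1, hrent t]; ring
    rw [h2, key]
  have hequi : IsEquilibrium1 c cy cz e1 e2 G m (fun t => sstar * e1 * G ^ t) := by
    intro t
    refine ⟨by positivity, ?_, ?_⟩
    · show sstar * e1 * G ^ t < e1 * G ^ t
      nlinarith [hl t]
    · simp only [hc t, hcy t, hcz t]
      have : G ^ (t + 1) = G * G ^ t := pow_succ' G t
      rw [this]
      linear_combination (e1 * G ^ t) * heq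
  have hirate : ∀ t : ℕ, irate1 c cy e1 e2 G m (fun t => sstar * e1 * G ^ t) t =
      cy ys zs / cz ys zs := by
    intro t
    simp only [irate1, hprice t]
    have : G ^ (t + 1) = G * G ^ t := pow_succ' G t
    rw [this]
    have h1 : G * sstar * cz ys zs / cy ys zs * e1 * G ^ t ≠ 0 := by positivity
    field_simp
  have hRid : cy ys zs / cz ys zs = G + m * c ys zs / (sstar * cz ys zs) := by
    rw [div_eq_iff hcz0.ne', add_mul, div_mul_eq_mul_div, mul_comm sstar (cz ys zs),
      ← div_div, mul_div_assoc]
    rw [div_self hcz0.ne', mul_one, eq_comm, add_comm, ← eq_sub_iff_add_eq,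
      div_eq_iff hs0.ne']
    linear_combination heq
  have hRG : G < cy ys zs / cz ys zs := by
    rw [hRid]
    have : 0 < m * c ys zs / (sstar * cz ys zs) := by positivity
    linarith
  refine ⟨hequi, hrent, hprice, hirate, hRid, hRG, ?_, ?_⟩
  · intro t
    rw [hprice t, hrent t, hprice 0, hrent 0]
    have h1 : (0:ℝ) < m * (c ys zs / cy ys zs) * e1 * G ^ t := by positivity
    have h2 : (0:ℝ) < m * (c ys zs / cy ys zs) * e1 * G ^ 0 := by positivity
    field_simp
  · set R := cy ys zs / cz ys zs with hRdef
    have hRpos : 0 < R := by positivity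
    have hfun : (fun T : ℕ => R ^ (-(T : ℝ)) *
        price1 c cy e1 e2 G m (fun t => sstar * e1 * G ^ t) T) =
        fun T : ℕ => (G * sstar * cz ys zs / cy ys zs * e1) * (G / R) ^ T := by
      funext T
      rw [hprice T, Real.rpow_neg hRpos.le, Real.rpow_natCast, div_pow]
      ring
    rw [hfun]
    have h0 : (0:ℝ) ≤ G / R := by positivity
    have h1 : G / R < 1 := (div_lt_one hRpos).mpr hRG
    have := (tendsto_pow_atTop_nhds_zero_of_lt_one h0 h1).const_mul
      (G * sstar * cz ys zs / cy ys zs * e1)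
    simpa using this
end
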